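/- For all real numbers h and all real z, the Gaussian integral identity ∫_{−∞}^{h} φ(z)[1 − e^{−(h−z)(h−x)}] φ(x) dx = Φ(h)φ(z) − Φ(z)φ(h) holds. -/
import Mathlib


open MeasureTheory Real

/-- The standard normal density. -/
noncomputable def phi (x : ℝ) : ℝ := (Real.sqrt (2 * Real.pi))⁻¹ * Real.exp (-x ^ 2 / 2)

/-- The standard normal cumulative distribution function. -/
noncomputable def Phi (t : ℝ) : ℝ := ∫ x in Set.Iic t, phi x

lemma integrable_phi : Integrable phi := by
  have : Integrable (fun x : ℝ => Real.exp (-(1/2 : ℝ) * x ^ 2)) :=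
    integrable_exp_neg_mul_sq (by norm_num)
  have h2 : phi = fun x : ℝ =>
      (Real.sqrt (2 * Real.pi))⁻¹ * Real.exp (-(1/2 : ℝ) * x ^ 2) := by
    funext x; unfold phi; congr 1; ring
  rw [h2]
  exact this.const_mul _

lemma phi_key (h z x : ℝ) :
    phi z * Real.exp (-(h - z) * (h - x)) * phi x = phi h * phi (x + (z - h)) := by
  have key : Real.exp (-z ^ 2 / 2) * Real.exp (-(h - z) * (h - x)) *
      Real.exp (-x ^ 2 / 2) =
      Real.exp (-h ^ 2 / 2) * Real.exp (-(x + (z - h)) ^ 2 / 2) := by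
    rw [← Real.exp_add, ← Real.exp_add, ← Real.exp_add]
    congr 1; ring
  unfold phi
  linear_combination (Real.sqrt (2 * Real.pi))⁻¹ * (Real.sqrt (2 * Real.pi))⁻¹ * key

lemma integral_phi_shift (h z : ℝ) :
    ∫ x in Set.Iic h, phi (x + (z - h)) = Phi z := by
  have hmp : MeasurePreserving (fun x : ℝ => x + (z - h)) volume volume :=
    measurePreserving_add_right volume (z - h)
  have hemb : MeasurableEmbedding (fun x : ℝ => x + (z - h)) :=
    (MeasurableEquiv.addRight (z - h)).measurableEmbedding
  have hpre : (fun x : ℝ => x + (z - h)) ⁻¹' Set.Iic z = Set.Iic h := by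
    ext x; simp
  have := hmp.setIntegral_preimage_emb hemb phi (Set.Iic z)
  rw [hpre] at this
  exact this

theorem integral_transition_kernel_density (h z : ℝ) :
    ∫ x in Set.Iic h, phi z * (1 - Real.exp (-(h - z) * (h - x))) * phi x =
      Phi h * phi z - Phi z * phi h := by
  have heq : ∀ x : ℝ, phi z * (1 - Real.exp (-(h - z) * (h - x))) * phi x =
      phi z * phi x - phi h * phi (x + (z - h)) := by
    intro x
    linear_combination -phi_key h z x
  have hint1 : IntegrableOn (fun x => phi z * phi x) (Set.Iic h) :=
    (integrable_phi.const_mul (phi z)).integrableOn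
  have hint2 : IntegrableOn (fun x => phi h * phi (x + (z - h))) (Set.Iic h) :=
    (((integrable_phi.comp_add_right (z - h))).const_mul (phi h)).integrableOn
  calc ∫ x in Set.Iic h, phi z * (1 - Real.exp (-(h - z) * (h - x))) * phi x
      = ∫ x in Set.Iic h, (phi z * phi x - phi h * phi (x + (z - h))) := by
        refine setIntegral_congr_fun measurableSet_Iic fun x _ => heq x
    _ = (∫ x in Set.Iic h, phi z * phi x) - ∫ x in Set.Iic h, phi h * phi (x + (z - h)) :=
        integral_sub hint1 hint2
    _ = phi z * Phi h - phi h * Phi z := by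
        rw [MeasureTheory.integral_const_mul, MeasureTheory.integral_const_mul, integral_phi_shift h z]; rfl
    _ = Phi h * phi z - Phi z * phi h := by ring
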